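/- Let A:𝕋→SL(2,ℝ) be continuous, ω nonresonant, and suppose v:𝕋→ℂ²∖{0} is continuous with v(θ+2πω)=e^{-iφ}A(θ)v(θ). If v(θ) and v̄(θ) are linearly dependent for every θ, and there exist a continuous h:𝕋→ℝ and k∈ℤ with v̄(t)=e^{i(h(t)+kt)}v(t) for all t, then φ satisfies φ=π(j+kω) mod 2π for some integer j. -/

import Mathlib

open Complex

/-- If `A : 𝕋 → SL(2,ℝ)` is continuous, `ω` nonresonant, `v : 𝕋 → ℂ² \ {0}` continuous with
`v(θ + 2πω) = e^{-iφ} A(θ) v(θ)`, and `v(θ)`, `v̄(θ)` are linearly dependent for every `θ`,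
witnessed by a continuous `h : 𝕋 → ℝ` and `k ∈ ℤ` with `v̄(t) = e^{i(h(t) + kt)} v(t)` for
all `t`, then `φ = π(j + kω) (mod 2π)` for some integer `j`. -/
theorem dependent_conjugate_forces_resonant_exponent
    (ω φ : ℝ)
    (hnonres : ∀ k : ℤ, k ≠ 0 → Real.sin (2 * Real.pi * k * ω) ≠ 0)
    (A : AddCircle (2 * Real.pi) → Matrix.SpecialLinearGroup (Fin 2) ℝ)
    (hA : Continuous fun θ => ((A θ : Matrix (Fin 2) (Fin 2) ℝ)))
    (v : AddCircle (2 * Real.pi) → Fin 2 → ℂ)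
    (hv : Continuous v)
    (hvne : ∀ θ, v θ ≠ 0)
    (hsol : ∀ θ : AddCircle (2 * Real.pi),
      v (θ + ((2 * Real.pi * ω : ℝ) : AddCircle (2 * Real.pi)))
        = Complex.exp (-Complex.I * φ) •
            (((A θ : Matrix (Fin 2) (Fin 2) ℝ)).map Complex.ofReal).mulVec (v θ))
    (hdep : ∀ θ : AddCircle (2 * Real.pi),
      ¬ LinearIndependent ℂ ![v θ, fun i => starRingEnd ℂ (v θ i)])
    (h : AddCircle (2 * Real.pi) → ℝ) (hh : Continuous h) (k : ℤ)
    (hrel : ∀ t : ℝ,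
      (fun i => starRingEnd ℂ (v ((t : AddCircle (2 * Real.pi))) i))
        = Complex.exp (Complex.I * ((h (t : AddCircle (2 * Real.pi)) : ℝ) + (k : ℝ) * t))
            • v (t : AddCircle (2 * Real.pi))) :
    ∃ j m : ℤ, φ = Real.pi * ((j : ℝ) + (k : ℝ) * ω) + 2 * Real.pi * (m : ℝ) := by
  classical
  have h2π : (0:ℝ) < 2 * Real.pi := by positivity
  haveI : Fact (0 < 2 * Real.pi) := ⟨h2π⟩
  set c : AddCircle (2 * Real.pi) := ((2 * Real.pi * ω : ℝ) : AddCircle (2 * Real.pi)) with hc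
  -- Step 1: cohomological equation mod 2π
  have key : ∀ θ : AddCircle (2 * Real.pi), ∃ n : ℤ,
      h (θ + c) - h θ + 2 * Real.pi * k * ω - 2 * φ = 2 * Real.pi * n := by
    intro θ
    obtain ⟨t, rfl⟩ := QuotientAddGroup.mk_surjective θ
    set θ : AddCircle (2 * Real.pi) := (t : AddCircle (2 * Real.pi)) with hθ
    have hcoe : ((t + 2 * Real.pi * ω : ℝ) : AddCircle (2 * Real.pi)) = θ + c := rfl
    have h1 := hrel t
    have h2 := hrel (t + 2 * Real.pi * ω)
    rw [hcoe] at h2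
    have h3 := hsol θ
    obtain ⟨i₀, hi₀⟩ := Function.ne_iff.mp (hvne (θ + c))
    set M : Matrix (Fin 2) (Fin 2) ℂ := ((A θ : Matrix (Fin 2) (Fin 2) ℝ)).map Complex.ofReal with hM
    -- M.mulVec (v θ) = exp(Iφ) • v (θ + c)
    have hexpne : Complex.exp (-Complex.I * φ) ≠ 0 := Complex.exp_ne_zero _
    have h4 : (M.mulVec (v θ)) i₀ = Complex.exp (Complex.I * φ) * v (θ + c) i₀ := by
      have := congrFun h3 i₀
      rw [Pi.smul_apply, smul_eq_mul] at this
      rw [this, ← mul_assoc, ← Complex.exp_add]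
      ring_nf
      rw [Complex.exp_zero, one_mul]
    -- conjugate of the solution equation at component i₀
    have h5 : (starRingEnd ℂ) (v (θ + c) i₀)
        = Complex.exp (Complex.I * φ) * (M.mulVec (fun j => (starRingEnd ℂ) (v θ j))) i₀ := by
      have := congrFun h3 i₀
      rw [Pi.smul_apply, smul_eq_mul] at this
      rw [this, map_mul]
      congr 1
      · rw [← Complex.exp_conj]
        congr 1
        simp [Complex.conj_ofReal]
      · simp only [Matrix.mulVec, dotProduct, map_sum, map_mul, hM, Matrix.map_apply,
          Complex.conj_ofReal]
    -- substitute hrel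
    have h6 : (fun j => (starRingEnd ℂ) (v θ j))
        = Complex.exp (Complex.I * ((h θ : ℝ) + (k:ℝ) * t)) • v θ := h1
    rw [h6, Matrix.mulVec_smul, Pi.smul_apply, smul_eq_mul, h4] at h5
    have h7 : (starRingEnd ℂ) (v (θ + c) i₀)
        = Complex.exp (Complex.I * ((h (θ + c) : ℝ) + (k:ℝ) * ((t + 2 * Real.pi * ω : ℝ) : ℂ))) * v (θ + c) i₀ := by
      have := congrFun h2 i₀
      rwa [Pi.smul_apply, smul_eq_mul] at this
    rw [h7] at h5
    have h8 : Complex.exp (Complex.I * ((h (θ + c) : ℝ) + (k:ℝ) * ((t + 2 * Real.pi * ω : ℝ) : ℂ)))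
        = Complex.exp (Complex.I * φ) * (Complex.exp (Complex.I * ((h θ : ℝ) + (k:ℝ) * t)) *
            Complex.exp (Complex.I * φ)) := mul_right_cancel₀ hi₀ (by linear_combination h5)
    rw [← Complex.exp_add, ← Complex.exp_add, Complex.exp_eq_exp_iff_exists_int] at h8
    obtain ⟨n, hn⟩ := h8
    refine ⟨n, ?_⟩
    have hn' : (Complex.I : ℂ) * ((h (θ + c) - h θ + 2 * Real.pi * k * ω - 2 * φ : ℝ))
        = Complex.I * ((2 * Real.pi * n : ℝ)) := by
      push_cast
      push_cast at hn
      linear_combination hn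
    have := mul_left_cancel₀ Complex.I_ne_zero hn'
    exact_mod_cast this
  -- Step 2: the integer n is constant by connectedness
  set F : AddCircle (2 * Real.pi) → ℝ :=
    fun θ => (h (θ + c) - h θ + 2 * Real.pi * k * ω - 2 * φ) / (2 * Real.pi) with hF
  have hFint : ∀ θ, ∃ n : ℤ, F θ = n := by
    intro θ
    obtain ⟨n, hn⟩ := key θ
    exact ⟨n, by rw [hF]; field_simp [hn]; linarith⟩
  have hFcont : Continuous F :=
    (((hh.comp (continuous_id.add continuous_const)).sub hh).add continuous_const).sub
      continuous_const |>.div_const _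
  have hFconst : ∀ θ₁ θ₂, F θ₁ = F θ₂ := by
    intro θ₁ θ₂
    by_contra hne
    obtain ⟨n₁, hn₁⟩ := hFint θ₁
    obtain ⟨n₂, hn₂⟩ := hFint θ₂
    wlog hlt : F θ₁ < F θ₂ generalizing θ₁ θ₂ n₁ n₂
    · exact this θ₂ θ₁ (Ne.symm hne) n₂ hn₂ n₁ hn₁
        (lt_of_le_of_ne (not_lt.mp hlt) (Ne.symm hne))
    have hn12 : n₁ < n₂ := by
      have : (n₁:ℝ) < n₂ := by rw [← hn₁, ← hn₂]; exact hlt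
      exact_mod_cast this
    have hmem : ((n₁:ℝ) + 1/2) ∈ Set.Icc (F θ₁) (F θ₂) := by
      constructor
      · rw [hn₁]; linarith
      · rw [hn₂]
        have : (n₁:ℝ) + 1 ≤ n₂ := by exact_mod_cast hn12
        linarith
    obtain ⟨x, hx⟩ := intermediate_value_univ θ₁ θ₂ hFcont hmem
    obtain ⟨m, hm⟩ := hFint x
    rw [hm] at hx
    have : (2*m : ℝ) = 2*n₁ + 1 := by linarith
    have : (2*m : ℤ) = 2*n₁ + 1 := by exact_mod_cast this
    omega
  obtain ⟨n, hn⟩ := hFint 0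
  have hGconst : ∀ θ, h (θ + c) - h θ = 2 * φ - 2 * Real.pi * k * ω + 2 * Real.pi * n := by
    intro θ
    have h1 : F θ = n := (hFconst θ 0).trans hn
    rw [hF] at h1
    have := (div_eq_iff (by positivity : (2*Real.pi:ℝ) ≠ 0)).mp h1
    linarith
  -- Step 3: max/min of h forces the constant to vanish
  obtain ⟨θM, -, hθM⟩ := isCompact_univ.exists_isMaxOn Set.univ_nonempty hh.continuousOn
  obtain ⟨θm, -, hθm⟩ := isCompact_univ.exists_isMinOn Set.univ_nonempty hh.continuousOn
  have hle : h (θM + c) - h θM ≤ 0 := by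
    have h1 : h (θM + c) ≤ h θM := hθM (Set.mem_univ (θM + c))
    linarith
  have hge : 0 ≤ h (θm + c) - h θm := by
    have h1 : h θm ≤ h (θm + c) := hθm (Set.mem_univ (θm + c))
    linarith
  have hzero : 2 * φ - 2 * Real.pi * k * ω + 2 * Real.pi * n = 0 := by
    have h1 := hGconst θM
    have h2 := hGconst θm
    linarith
  exact ⟨-n, 0, by push_cast; linarith⟩
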